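/- Let X = (1/2)(i·n₋ - h + i·n₊) with n₋ = [[0,1],[0,0]], h = [[-1,0],[0,1]], n₊ = [[0,0],[1,0]]. Then for any complex z with |z| < 1 and z ≠ 1, the Möbius transformation of exp(zX) maps i to ((1+z)/(1-z))·i, and this point lies in the upper half plane. -/

import Mathlib

open Matrix Complex

lemma exp_of_sq_zero (A : Matrix (Fin 2) (Fin 2) ℂ) (hA : A * A = 0) :
    NormedSpace.exp A = 1 + A := by
  have hpow : ∀ n : ℕ, 2 ≤ n → A ^ n = 0 := by
    intro n hn
    obtain ⟨k, rfl⟩ := Nat.exists_eq_add_of_le hn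
    rw [pow_add, pow_two, hA, zero_mul]
  rw [NormedSpace.exp_eq_tsum (𝕂 := ℂ)]
  show (∑' n : ℕ, (n.factorial : ℂ)⁻¹ • A ^ n) = 1 + A
  rw [tsum_eq_sum (s := Finset.range 2)]
  · simp [Finset.sum_range_succ]
  · intro n hn
    rw [hpow n (by simp at hn; omega), smul_zero]

/-- The Möbius transformation of exp(zX) maps i to ((1+z)/(1-z))·i, a point of
the upper half plane, for |z| < 1 and z ≠ 1. -/
theorem expzX_moebius_sends_i (z : ℂ) (hz : ‖z‖ < 1) (hz1 : z ≠ 1) :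
    let nm : Matrix (Fin 2) (Fin 2) ℂ := !![0, 1; 0, 0]
    let h : Matrix (Fin 2) (Fin 2) ℂ := !![-1, 0; 0, 1]
    let np : Matrix (Fin 2) (Fin 2) ℂ := !![0, 0; 1, 0]
    let X : Matrix (Fin 2) (Fin 2) ℂ := (1/2 : ℂ) • (I • nm - h + I • np)
    let g : Matrix (Fin 2) (Fin 2) ℂ := NormedSpace.exp (z • X)
    (g 0 0 * I + g 0 1) / (g 1 0 * I + g 1 1) = ((1 + z)/(1 - z)) * I ∧
    0 < (((1 + z)/(1 - z)) * I).im := by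
  intro nm h np X g
  have h1z : (1 : ℂ) - z ≠ 0 := sub_ne_zero.mpr (Ne.symm hz1)
  have hM : z • X = !![z/2, I*z/2; I*z/2, -(z/2)] := by
    simp only [X, nm, h, np]
    ext i j
    fin_cases i <;> fin_cases j <;> simp <;> ring
  have hsq : (z • X) * (z • X) = 0 := by
    rw [hM]
    ext i j
    fin_cases i <;> fin_cases j <;>
      simp [Matrix.mul_apply, Fin.sum_univ_two] <;> ring_nf <;>
      simp [Complex.I_sq]
  have hg : g = 1 + z • X := exp_of_sq_zero _ hsq
  have hg00 : g 0 0 = 1 + z/2 := by rw [hg, hM]; simp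
  have hg01 : g 0 1 = I*z/2 := by rw [hg, hM]; simp
  have hg10 : g 1 0 = I*z/2 := by rw [hg, hM]; simp
  have hg11 : g 1 1 = 1 - z/2 := by rw [hg, hM]; simp [sub_eq_add_neg]
  constructor
  · rw [hg00, hg01, hg10, hg11]
    have hden : I * z / 2 * I + (1 - z / 2) = 1 - z := by
      have := Complex.I_sq
      field_simp
      linear_combination z * Complex.I_sq
    rw [hden]
    field_simp
    ring
  · have him : (((1 + z)/(1 - z)) * I).im = ((1 + z)/(1 - z)).re := by simp
    rw [him]
    rw [Complex.div_re]
    have hnum : (1 + z).re * (1 - z).re + (1 + z).im * (1 - z).im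
        = 1 - Complex.normSq z := by
      simp [Complex.normSq_apply]; ring
    rw [← add_div, hnum]
    apply div_pos
    · have : Complex.normSq z < 1 := by
        rw [← Complex.sq_norm]; nlinarith [norm_nonneg z]
      linarith
    · exact Complex.normSq_pos.mpr h1z
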